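/- Suppose G acts continuously and properly on M, preserving the Radon measure μ. Then for all continuous compactly supported s₁, s₂ : M → H, the function F : G → ℂ defined by F(g) := ⟨s₁, g·s₂⟩_{L²} = ∫_M ⟨s₁(m), ρ(g)(s₂(g⁻¹•m))⟩_H dμ(m) is continuous and compactly supported; its support is contained in the compact set {g ∈ G : (g•supp s₂) ∩ supp s₁ ≠ ∅}. -/

import Mathlib

open MeasureTheory Pointwise

lemma rho_apply_continuous {G : Type*} [Group G] [TopologicalSpace G]
    {H : Type*} [NormedAddCommGroup H] [InnerProductSpace ℂ H]
    (ρ : G →* (H ≃ₗᵢ[ℂ] H)) (hρ : ∀ v : H, Continuous fun g : G => ρ g v)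
    {X : Type*} [TopologicalSpace X] {π : X → G} (hπ : Continuous π)
    {f : X → H} (hf : Continuous f) : Continuous fun x : X => ρ (π x) (f x) := by
  rw [continuous_iff_continuousAt]
  intro x₀
  have h1 : Filter.Tendsto (fun x => ρ (π x) (f x) - ρ (π x) (f x₀)) (nhds x₀) (nhds 0) := by
    apply squeeze_zero_norm (a := fun x => ‖f x - f x₀‖)
    · exact fun x => le_of_eq (by rw [← map_sub, (ρ (π x)).norm_map])
    · have : Filter.Tendsto (fun x => f x - f x₀) (nhds x₀) (nhds (f x₀ - f x₀)) :=
        (hf.tendsto x₀).sub tendsto_const_nhds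
      simpa using this.norm
  have h2 : Filter.Tendsto (fun x => ρ (π x) (f x₀)) (nhds x₀) (nhds (ρ (π x₀) (f x₀))) :=
    ((hρ (f x₀)).tendsto (π x₀)).comp (hπ.tendsto x₀)
  have := h1.add h2
  simpa [ContinuousAt] using this

/-- For a continuous proper measure-preserving action, the pairing
`F(g) = ⟨s₁, g·s₂⟩_{L²}` of continuous compactly supported `H`-valued functions is
continuous and compactly supported, with support contained in the compact transporter set
`{g : G | (g • supp s₂) ∩ supp s₁ ≠ ∅}`. -/
theorem pairing_continuous_compactly_supported
    {G : Type*} [Group G] [TopologicalSpace G] [IsTopologicalGroup G]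
    [LocallyCompactSpace G] [T2Space G] [MeasurableSpace G] [BorelSpace G]
    (μG : Measure G) [μG.IsHaarMeasure] [μG.IsMulRightInvariant]
    {M : Type*} [TopologicalSpace M] [LocallyCompactSpace M] [T2Space M]
    [MulAction G M] [ContinuousSMul G M]
    [MeasurableSpace M] [BorelSpace M]
    (μ : Measure M) [μ.Regular] [SMulInvariantMeasure G M μ]
    {H : Type*} [NormedAddCommGroup H] [InnerProductSpace ℂ H] [CompleteSpace H]
    (ρ : G →* (H ≃ₗᵢ[ℂ] H)) (hρ : ∀ v : H, Continuous fun g : G => ρ g v)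
    (hproper : IsProperMap (fun p : G × M => (p.1 • p.2, p.2)))
    (s₁ s₂ : M → H)
    (h₁_cont : Continuous s₁) (h₁_supp : HasCompactSupport s₁)
    (h₂_cont : Continuous s₂) (h₂_supp : HasCompactSupport s₂) :
    Continuous (fun g : G => ∫ m, (inner ℂ (s₁ m) (ρ g (s₂ (g⁻¹ • m))) : ℂ) ∂μ) ∧
    IsCompact {g : G | ((g • tsupport s₂) ∩ tsupport s₁).Nonempty} ∧
    Function.support (fun g : G => ∫ m, (inner ℂ (s₁ m) (ρ g (s₂ (g⁻¹ • m))) : ℂ) ∂μ) ⊆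
      {g : G | ((g • tsupport s₂) ∩ tsupport s₁).Nonempty} ∧
    HasCompactSupport (fun g : G => ∫ m, (inner ℂ (s₁ m) (ρ g (s₂ (g⁻¹ • m))) : ℂ) ∂μ) := by
  -- Continuity
  have hcont : Continuous (fun g : G => ∫ m, (inner ℂ (s₁ m) (ρ g (s₂ (g⁻¹ • m))) : ℂ) ∂μ) := by
    rw [← continuousOn_univ]
    apply continuousOn_integral_of_compact_support
      (f := fun (g : G) (m : M) => (inner ℂ (s₁ m) (ρ g (s₂ (g⁻¹ • m))) : ℂ)) h₁_supp
    · have : Continuous fun p : G × M => (inner ℂ (s₁ p.2) (ρ p.1 (s₂ (p.1⁻¹ • p.2))) : ℂ) :=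
        (h₁_cont.comp continuous_snd).inner
          (rho_apply_continuous ρ hρ continuous_fst
            (h₂_cont.comp ((continuous_fst.inv).smul continuous_snd)))
      exact this.continuousOn
    · intro g m _ hm
      rw [image_eq_zero_of_notMem_tsupport hm, inner_zero_left]
  refine ⟨hcont, ?_⟩
  -- Compactness of the transporter set
  have hK : IsCompact ((fun p : G × M => (p.1 • p.2, p.2)) ⁻¹'
      (tsupport s₁ ×ˢ tsupport s₂)) :=
    hproper.isCompact_preimage (h₁_supp.prod h₂_supp)
  have hset : {g : G | ((g • tsupport s₂) ∩ tsupport s₁).Nonempty} =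
      Prod.fst '' ((fun p : G × M => (p.1 • p.2, p.2)) ⁻¹' (tsupport s₁ ×ˢ tsupport s₂)) := by
    ext g
    constructor
    · rintro ⟨x, ⟨m, hm, rfl⟩, hx1⟩
      exact ⟨(g, m), ⟨hx1, hm⟩, rfl⟩
    · rintro ⟨⟨g', m⟩, ⟨h1, h2⟩, rfl⟩
      exact ⟨g' • m, ⟨m, h2, rfl⟩, h1⟩
  have hcpt : IsCompact {g : G | ((g • tsupport s₂) ∩ tsupport s₁).Nonempty} := by
    rw [hset]; exact hK.image continuous_fst
  refine ⟨hcpt, ?_⟩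
  -- Support containment
  have hsupp : Function.support
      (fun g : G => ∫ m, (inner ℂ (s₁ m) (ρ g (s₂ (g⁻¹ • m))) : ℂ) ∂μ) ⊆
      {g : G | ((g • tsupport s₂) ∩ tsupport s₁).Nonempty} := by
    intro g hg
    by_contra hempty
    apply hg
    have hzero : ∀ m : M, (inner ℂ (s₁ m) (ρ g (s₂ (g⁻¹ • m))) : ℂ) = 0 := by
      intro m
      by_contra hne
      have hs₁ : s₁ m ≠ 0 := by
        intro h; apply hne; rw [h, inner_zero_left]
      have hs₂ : s₂ (g⁻¹ • m) ≠ 0 := by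
        intro h; apply hne; rw [h]; simp
      apply hempty
      refine ⟨m, ?_, subset_tsupport s₁ hs₁⟩
      rw [Set.mem_smul_set_iff_inv_smul_mem]
      exact subset_tsupport s₂ hs₂
    simp only [hzero, integral_zero]
  refine ⟨hsupp, ?_⟩
  -- Compact support
  apply HasCompactSupport.intro hcpt
  intro g hg
  by_contra hne
  exact hg (hsupp hne)
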